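/- For a left non-degenerate solution (X,r) of the Yang–Baxter equation, the maps σ_x (defined by σ_z(x) = λ_z(ρ_{λ_x^{-1}(z)}(x))) satisfy σ_x ∘ σ_y = σ_{σ_x(y)} ∘ σ_x for all x,y ∈ X. Hence, if (X,r) is moreover bijective, the operation x ◁ y = σ_y(x) makes (X,◁) a rack. -/
import Mathlib


def sigmaMap {X : Type*} (lam : X → Equiv.Perm X) (rho : X → X → X) (z x : X) : X :=
  lam z (rho ((lam x).symm z) x)

theorem stmt4 {X : Type*} (lam : X → Equiv.Perm X) (rho : X → X → X)
    (hYB1 : ∀ x y z : X, lam x (lam y z) = lam (lam x y) (lam (rho y x) z))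
    (hYB2 : ∀ x y z : X,
      lam (rho (lam y z) x) (rho z y) = rho (lam (rho y x) z) (lam x y))
    (hYB3 : ∀ x y z : X, rho z (rho y x) = rho (rho z y) (rho (lam y z) x)) :
    (∀ x y z : X,
      sigmaMap lam rho x (sigmaMap lam rho y z) =
        sigmaMap lam rho (sigmaMap lam rho x y) (sigmaMap lam rho x z)) ∧
    -- if moreover `r` is bijective, `x ◁ y = σ_y(x)` is a rack: the self-distributivity
    -- law is the identity above, and each right translation `x ↦ x ◁ y = σ_y(x)` is bijective
    (Function.Bijective (fun p : X × X => (lam p.1 p.2, rho p.2 p.1)) →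
      ∀ y : X, Function.Bijective (sigmaMap lam rho y)) := by
  have helper : ∀ x y z : X,
      (lam (lam x y)).symm (lam x (lam y z)) = lam (rho y x) z := by
    intro x y z
    rw [Equiv.symm_apply_eq]
    exact hYB1 x y z
  constructor
  · intro x y z
    obtain ⟨b, rfl⟩ : ∃ b, y = lam z b := ⟨(lam z).symm y, ((lam z).apply_symm_apply y).symm⟩
    obtain ⟨c, rfl⟩ : ∃ c, x = lam z (lam b c) :=
      ⟨(lam b).symm ((lam z).symm x), by simp⟩
    simp only [sigmaMap, Equiv.symm_apply_apply, helper]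
    rw [← hYB2 z b c, helper, ← hYB2 (lam z (lam b c)) (rho (lam b c) z) (rho c b),
      ← hYB1 (lam z (lam b c)) (lam (rho (lam b c) z) (rho c b))
        (rho (rho c b) (rho (lam b c) z))]
    -- now handle LHS
    rw [hYB1 z b c, helper, ← hYB2 (lam z b) (rho b z) c, ← hYB2 z b c,
      hYB3 z b c, ← hYB1 z b c]
  · intro hbij y
    have hT : Function.Bijective (fun x : X => rho ((lam x).symm y) x) := by
      constructor
      · intro u v h
        have hu : (fun p : X × X => (lam p.1 p.2, rho p.2 p.1)) (u, (lam u).symm y)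
            = (y, rho ((lam u).symm y) u) := by simp
        have hv : (fun p : X × X => (lam p.1 p.2, rho p.2 p.1)) (v, (lam v).symm y)
            = (y, rho ((lam v).symm y) v) := by simp
        have h' : rho ((lam u).symm y) u = rho ((lam v).symm y) v := h
        have := hbij.injective (hu.trans (by rw [h']; exact hv.symm))
        exact congrArg Prod.fst this
      · intro t
        obtain ⟨⟨u, v⟩, huv⟩ := hbij.surjective (y, t)
        simp only [Prod.mk.injEq] at huv
        refine ⟨u, ?_⟩
        have hv : v = (lam u).symm y := by rw [← huv.1]; simp
        simp only [← hv, huv.2]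
    have : sigmaMap lam rho y = (lam y) ∘ (fun x : X => rho ((lam x).symm y) x) := rfl
    rw [this]
    exact (lam y).bijective.comp hT
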